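/- Assume f : ℝⁿ → ℝⁿ is continuously differentiable and monotone. For x ∈ ℝⁿ let μ_f(x) := min_{‖u‖=1} ⟨∇f(x)u, u⟩, and for d ∈ dom ∂q let μ_q(d) := lim_{ρ↓0} inf { ⟨d₁*−d₂*, d₁−d₂⟩/‖d₁−d₂‖² : dᵢ ∈ B_ρ(d), (dᵢ, dᵢ*) ∈ gph ∂q, d₁ ≠ d₂ }. Then for every d* ∈ ∂q(d), min_{‖s‖=1} dist(0, ∇f(x)ᵀs + D*(∂q)(d, d*)(s)) ≥ μ_f(x) + μ_q(d). -/

import Mathlib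

open RealInnerProductSpace Set Filter Topology

variable {H : Type*} [NormedAddCommGroup H] [InnerProductSpace ℝ H]

/-- The convex (Moreau–Rockafellar) subdifferential of an `EReal`-valued function. -/
noncomputable def subdiff (q : H → EReal) (x : H) : Set H :=
  {v | ∀ y, q x + ((⟪v, y - x⟫ : ℝ) : EReal) ≤ q y}

/-- `q` is proper: finite somewhere, never `-∞`. -/
def ProperFun (q : H → EReal) : Prop := (∃ x, q x ≠ ⊤) ∧ ∀ x, q x ≠ ⊥

/-- `q` is convex: its epigraph is a convex set. -/
def ConvexFun (q : H → EReal) : Prop := Convex ℝ {p : H × ℝ | q p.1 ≤ (p.2 : EReal)}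

/-- The objective of the proximal subproblem `u ↦ (γ/2)‖u‖² + ⟨f(x),u⟩ + q(x+u)`. -/
noncomputable def proxObj (f : H → H) (q : H → EReal) (γ : ℝ) (x u : H) : EReal :=
  ((γ / 2 * ‖u‖ ^ 2 + ⟪f x, u⟫ : ℝ) : EReal) + q (x + u)

/-- The regular (Fréchet) normal cone to the graph of `Φ` at `(x, y)`. -/
def gphFrechetNormal (Φ : H → Set H) (x y : H) : Set (H × H) :=
  {p | ∀ ε > (0 : ℝ), ∃ δ > (0 : ℝ), ∀ x' y', y' ∈ Φ x' → ‖x' - x‖ < δ → ‖y' - y‖ < δ →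
    ⟪p.1, x' - x⟫ + ⟪p.2, y' - y⟫ ≤ ε * (‖x' - x‖ + ‖y' - y‖)}

/-- The limiting (Mordukhovich) normal cone to the graph of `Φ` at `(x, y)`. -/
def gphLimitingNormal (Φ : H → Set H) (x y : H) : Set (H × H) :=
  {p | ∃ (xs ys : ℕ → H) (ps : ℕ → H × H),
    (∀ k, ys k ∈ Φ (xs k) ∧ ps k ∈ gphFrechetNormal Φ (xs k) (ys k)) ∧
    Tendsto xs atTop (nhds x) ∧ Tendsto ys atTop (nhds y) ∧ Tendsto ps atTop (nhds p)}

/-- The limiting coderivative `D*Φ(x, y)`: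
`u* ∈ D*Φ(x,y)(v*)` iff `(u*, -v*)` is a limiting normal to `gph Φ` at `(x, y)`. -/
def coderiv (Φ : H → Set H) (x y vstar : H) : Set H :=
  {ustar | (ustar, -vstar) ∈ gphLimitingNormal Φ x y}


section AuxLemmas

lemma subdiff_finite' {q : H → EReal} (hproper : ProperFun q) {u v : H}
    (hv : v ∈ subdiff q u) : ∃ a : ℝ, q u = (a : EReal) := by
  have hb : q u ≠ ⊥ := hproper.2 u
  have ht : q u ≠ ⊤ := by
    intro h
    obtain ⟨x₀, hx₀⟩ := hproper.1
    have := hv x₀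
    rw [h, EReal.top_add_coe] at this
    exact hx₀ (top_le_iff.mp this)
  exact ⟨(q u).toReal, (EReal.coe_toReal ht hb).symm⟩

lemma subdiff_real_ineq' {q : H → EReal} {u v y : H} {a b : ℝ}
    (hv : v ∈ subdiff q u) (hu : q u = (a : EReal)) (hy : q y = (b : EReal)) :
    a + ⟪v, y - u⟫ ≤ b := by
  have := hv y
  rw [hu, hy, ← EReal.coe_add, EReal.coe_le_coe_iff] at this
  exact this

lemma subdiff_mono' {q : H → EReal} (hproper : ProperFun q) {u₁ u₂ v₁ v₂ : H}
    (h₁ : v₁ ∈ subdiff q u₁) (h₂ : v₂ ∈ subdiff q u₂) :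
    0 ≤ ⟪v₁ - v₂, u₁ - u₂⟫ := by
  obtain ⟨a₁, ha₁⟩ := subdiff_finite' hproper h₁
  obtain ⟨a₂, ha₂⟩ := subdiff_finite' hproper h₂
  have e₁ := subdiff_real_ineq' h₁ ha₁ ha₂
  have e₂ := subdiff_real_ineq' h₂ ha₂ ha₁
  have i1 : ⟪v₁, u₂ - u₁⟫ = ⟪v₁, u₂⟫ - ⟪v₁, u₁⟫ := inner_sub_right v₁ u₂ u₁
  have i2 : ⟪v₂, u₁ - u₂⟫ = ⟪v₂, u₁⟫ - ⟪v₂, u₂⟫ := inner_sub_right v₂ u₁ u₂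
  have i3 : ⟪v₁ - v₂, u₁ - u₂⟫ = (⟪v₁, u₁⟫ - ⟪v₁, u₂⟫) - (⟪v₂, u₁⟫ - ⟪v₂, u₂⟫) := by
    rw [inner_sub_left, inner_sub_right, inner_sub_right]
  rw [i1] at e₁; rw [i2] at e₂; rw [i3]; linarith

lemma convexFun_ineq' {q : H → EReal} (hconv : ConvexFun q) {u₁ u₂ : H} {a b : ℝ}
    (h1 : q u₁ ≤ (a : EReal)) (h2 : q u₂ ≤ (b : EReal)) {t : ℝ} (ht0 : 0 ≤ t) (ht1 : t ≤ 1) :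
    q (t • u₁ + (1 - t) • u₂) ≤ ((t * a + (1 - t) * b : ℝ) : EReal) := by
  have := hconv (x := (u₁, a)) h1 (y := (u₂, b)) h2 (a := t) (b := 1 - t)
    ht0 (by linarith) (by ring)
  simpa [Prod.smul_mk, smul_eq_mul] using this

lemma lsc_add_cont' {q : H → EReal} (hlsc : LowerSemicontinuous q) (hq : ∀ u, q u ≠ ⊥)
    {g : H → ℝ} (hg : Continuous g) :
    LowerSemicontinuous fun u => q u + ((g u : ℝ) : EReal) := by
  intro x y hy
  induction y using EReal.rec with
  | bot =>
    filter_upwards with x'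
    have h1 : q x' + ((g x' : ℝ) : EReal) ≠ ⊥ := by
      intro h
      rcases EReal.add_eq_bot_iff.mp h with h | h
      · exact hq x' h
      · exact EReal.coe_ne_bot _ h
    exact bot_lt_iff_ne_bot.mpr h1
  | top => exact absurd hy (not_top_lt)
  | coe c =>
    replace hy : (c : EReal) < q x + ((g x : ℝ) : EReal) := hy
    obtain ⟨r, hr1, hr2⟩ : ∃ r : ℝ, c - g x < r ∧ (r : EReal) < q x := by
      by_cases hT : q x = ⊤
      · exact ⟨c - g x + 1, by linarith, by rw [hT]; exact EReal.coe_lt_top _⟩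
      · have hB := hq x
        set a := (q x).toReal with ha
        have hqa : q x = (a : EReal) := (EReal.coe_toReal hT hB).symm
        rw [hqa, ← EReal.coe_add, EReal.coe_lt_coe_iff] at hy
        refine ⟨((c - g x) + a) / 2, by linarith, ?_⟩
        rw [hqa, EReal.coe_lt_coe_iff]; linarith
    have E1 : ∀ᶠ x' in 𝓝 x, (r : EReal) < q x' := hlsc x r hr2
    have E2 : ∀ᶠ x' in 𝓝 x, c - r < g x' :=
      hg.continuousAt.eventually (eventually_gt_nhds (by linarith))
    filter_upwards [E1, E2] with x' h1 h2
    have h2' : ((c - r : ℝ) : EReal) < ((g x' : ℝ) : EReal) := EReal.coe_lt_coe_iff.mpr h2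
    have := EReal.add_lt_add h1 h2'
    rw [← EReal.coe_add] at this
    simpa using this

lemma lsc_exists_min' [ProperSpace H] {φ : H → EReal} (h : LowerSemicontinuous φ)
    {K : Set H} (hK : IsCompact K) (hne : K.Nonempty) :
    ∃ u ∈ K, ∀ v ∈ K, φ u ≤ φ v := by
  set S : Set EReal := φ '' K with hS
  set c : EReal := sInf S with hc
  obtain ⟨b, hbanti, hbtend, hbmem⟩ :=
    exists_seq_tendsto_sInf (hne.image φ) (OrderBot.bddBelow S)
  choose u hu hub using fun n => hbmem n
  obtain ⟨xx, hxK, g, hg, hgt⟩ := hK.tendsto_subseq hu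
  refine ⟨xx, hxK, fun v hv => ?_⟩
  have hxc : φ xx ≤ c := by
    by_contra hcx
    push_neg at hcx
    obtain ⟨y, hy1, hy2⟩ := exists_between hcx
    have hev : ∀ᶠ k in atTop, y < φ (u (g k)) := hgt.eventually (h xx y hy2)
    have htb : Tendsto (fun k => b (g k)) atTop (𝓝 c) := hbtend.comp hg.tendsto_atTop
    have hev2 : ∀ᶠ k in atTop, b (g k) < y := htb.eventually_lt_const hy1
    obtain ⟨k, hk1, hk2⟩ := (hev.and hev2).exists
    rw [hub (g k)] at hk1
    exact absurd hk1 (not_lt.mpr hk2.le)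
  exact hxc.trans (csInf_le (OrderBot.bddBelow S) (Set.mem_image_of_mem φ hv))

lemma step_div' (a0 cy I B t lam N : ℝ) (hlam : 0 < lam) (ht0 : 0 < t)
    (h2' : a0 + 1/(2*lam) * N ≤ t*cy + (1-t)*a0 + 1/(2*lam)*(N + 2*(t*I) + t^2*B)) :
    t * (a0 + lam⁻¹*(-I)) ≤ t * (cy + t*(B/(2*lam))) := by
  have h : t*a0 ≤ t*cy + (t*I)/lam + t^2*B/(2*lam) := by
    have e : 1/(2*lam)*(N + 2*(t*I) + t^2*B) - 1/(2*lam)*N = (t*I)/lam + t^2*B/(2*lam) := by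
      field_simp; ring
    linarith [h2', e]
  have e2 : t * (a0 + lam⁻¹*(-I)) = t*a0 - (t*I)/lam := by field_simp; ring
  have e3 : t * (cy + t*(B/(2*lam))) = t*cy + t^2*B/(2*lam) := by field_simp
  linarith

lemma eps_step' (e D : ℝ) (he : 0 < e) (hD : 0 ≤ D) : e / (2 * D + 1) * D < e := by
  rw [div_mul_eq_mul_div, div_lt_iff₀ (by linarith)]
  nlinarith

lemma prox_exists' [FiniteDimensional ℝ H] {q : H → EReal}
    (hproper : ProperFun q) (hconv : ConvexFun q) (hlsc : LowerSemicontinuous q)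
    {d dstar : H} (hd : dstar ∈ subdiff q d) {lam : ℝ} (hlam : 0 < lam) (z : H) :
    ∃ u, lam⁻¹ • (z - u) ∈ subdiff q u := by
  obtain ⟨a, ha⟩ := subdiff_finite' hproper hd
  set g : H → ℝ := fun u => 1 / (2 * lam) * ‖u - z‖ ^ 2 with hgdef
  have hgc : Continuous g :=
    continuous_const.mul (((continuous_id.sub continuous_const).norm).pow 2)
  set φ : H → EReal := fun u => q u + ((g u : ℝ) : EReal) with hφdef
  have hφlsc : LowerSemicontinuous φ := lsc_add_cont' hlsc hproper.2 hgc
  have hminor : ∀ u, ((a + ⟪dstar, u - d⟫ + g u : ℝ) : EReal) ≤ φ u := by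
    intro u
    have h1 := hd u
    rw [ha] at h1
    have h2 : ((a + ⟪dstar, u - d⟫ : ℝ) : EReal) ≤ q u := by rw [EReal.coe_add]; exact h1
    calc ((a + ⟪dstar, u - d⟫ + g u : ℝ) : EReal)
        = ((a + ⟪dstar, u - d⟫ : ℝ) : EReal) + ((g u : ℝ) : EReal) := by
          rw [← EReal.coe_add]
      _ ≤ q u + ((g u : ℝ) : EReal) := add_le_add_left h2 _
  set K₀ : ℝ := ‖dstar‖ * ‖z - d‖ + ‖d - z‖ ^ 2 / (2 * lam) + 1 with hK₀def
  have hK₀ : 0 ≤ K₀ := by positivity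
  set R : ℝ := 1 + ‖d - z‖ + 2 * lam * (‖dstar‖ + K₀) with hRdef
  have hR1 : 1 ≤ R := by
    nlinarith [norm_nonneg (d - z), mul_nonneg (by linarith : (0:ℝ) ≤ 2*lam)
      (by nlinarith [norm_nonneg dstar] : (0:ℝ) ≤ ‖dstar‖ + K₀)]
  have hdK : d ∈ Metric.closedBall z R := by
    rw [Metric.mem_closedBall, dist_eq_norm]
    nlinarith [mul_nonneg (by linarith : (0:ℝ) ≤ 2*lam)
      (by nlinarith [norm_nonneg dstar] : (0:ℝ) ≤ ‖dstar‖ + K₀)]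
  have hcoerc : ∀ u, u ∉ Metric.closedBall z R → φ d < φ u := by
    intro u hu
    have hr : R < ‖u - z‖ := by
      rw [Metric.mem_closedBall, dist_eq_norm, not_le] at hu; exact hu
    have hsplit : u - d = (u - z) + (z - d) := by abel
    have hnle : ‖u - d‖ ≤ ‖u - z‖ + ‖z - d‖ := by
      rw [hsplit]; exact norm_add_le _ _
    have habs : |⟪dstar, u - d⟫| ≤ ‖dstar‖ * ‖u - d‖ := abs_real_inner_le_norm _ _
    have hip : -(‖dstar‖ * (‖u - z‖ + ‖z - d‖)) ≤ ⟪dstar, u - d⟫ := by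
      nlinarith [neg_abs_le ⟪dstar, u - d⟫, norm_nonneg dstar]
    have hreal : a + g d < a + ⟪dstar, u - d⟫ + g u := by
      have hgd : g d = 1 / (2 * lam) * ‖d - z‖ ^ 2 := rfl
      have hgu : g u = 1 / (2 * lam) * ‖u - z‖ ^ 2 := rfl
      rw [hgd, hgu]
      have h1 : 2 * lam * (‖dstar‖ + K₀) < ‖u - z‖ := by nlinarith [norm_nonneg (d - z)]
      have h2 : 2 * lam * (‖dstar‖ + K₀) * ‖u - z‖ < ‖u - z‖ ^ 2 := by
        nlinarith [hR1.trans hr.le]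
      have h3 : (‖dstar‖ + K₀) * ‖u - z‖ < ‖u - z‖ ^ 2 / (2 * lam) := by
        rw [lt_div_iff₀ (by linarith : (0:ℝ) < 2 * lam)]; nlinarith
      have h4 : 1 ≤ ‖u - z‖ := hR1.trans hr.le
      have h5 : ‖dstar‖ * ‖u - z‖ + K₀ ≤ (‖dstar‖ + K₀) * ‖u - z‖ := by
        nlinarith [norm_nonneg dstar]
      have h6 : ‖dstar‖ * ‖z - d‖ + ‖d - z‖ ^ 2 / (2 * lam) + 1 = K₀ := rfl
      have hdiv : 1 / (2 * lam) * ‖u - z‖ ^ 2 = ‖u - z‖ ^ 2 / (2 * lam) := by ring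
      have hdiv2 : 1 / (2 * lam) * ‖d - z‖ ^ 2 = ‖d - z‖ ^ 2 / (2 * lam) := by ring
      rw [hdiv, hdiv2]
      clear_value K₀ R
      linarith [hip, h3, h5, h6]
    calc φ d = ((a + g d : ℝ) : EReal) := by
          rw [hφdef]; simp only; rw [ha, ← EReal.coe_add]
      _ < ((a + ⟪dstar, u - d⟫ + g u : ℝ) : EReal) := EReal.coe_lt_coe_iff.mpr hreal
      _ ≤ φ u := hminor u
  obtain ⟨u0, hu0K, hu0min⟩ := lsc_exists_min' hφlsc (isCompact_closedBall z R) ⟨d, hdK⟩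
  have hglobal : ∀ v, φ u0 ≤ φ v := by
    intro v
    by_cases hv : v ∈ Metric.closedBall z R
    · exact hu0min v hv
    · exact (hu0min d hdK).trans (hcoerc v hv).le
  have hu0T : q u0 ≠ ⊤ := by
    intro hT
    have h1 : φ u0 ≤ ((a + g d : ℝ) : EReal) := by
      have := hu0min d hdK
      rwa [show φ d = ((a + g d : ℝ) : EReal) by
        rw [hφdef]; simp only; rw [ha, ← EReal.coe_add]] at this
    rw [hφdef] at h1; simp only at h1
    rw [hT, EReal.top_add_coe] at h1
    exact EReal.coe_ne_top _ (top_le_iff.mp h1)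
  have hu0B : q u0 ≠ ⊥ := hproper.2 u0
  set a0 : ℝ := (q u0).toReal with ha0def
  have ha0 : q u0 = (a0 : EReal) := (EReal.coe_toReal hu0T hu0B).symm
  refine ⟨u0, fun y => ?_⟩
  by_cases hyT : q y = ⊤
  · rw [hyT]; exact le_top
  have hyB : q y ≠ ⊥ := hproper.2 y
  set cy : ℝ := (q y).toReal with hcydef
  have hcy : q y = (cy : EReal) := (EReal.coe_toReal hyT hyB).symm
  rw [ha0, hcy, ← EReal.coe_add, EReal.coe_le_coe_iff]
  set I : ℝ := ⟪u0 - z, y - u0⟫ with hIdef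
  set B : ℝ := ‖y - u0‖ ^ 2 with hBdef
  have hgoal_eq : ⟪lam⁻¹ • (z - u0), y - u0⟫ = lam⁻¹ * (-I) := by
    rw [real_inner_smul_left]
    congr 1
    rw [hIdef, ← inner_neg_left]
    congr 1
    abel
  rw [hgoal_eq]
  have hkey : ∀ t : ℝ, 0 < t → t ≤ 1 →
      a0 + lam⁻¹ * (-I) ≤ cy + t * (B / (2 * lam)) := by
    intro t ht0 ht1
    have hyt := convexFun_ineq' hconv (le_of_eq hcy) (le_of_eq ha0) ht0.le ht1
    set yt : H := t • y + (1 - t) • u0 with hytdef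
    have h2 : φ u0 ≤ ((t * cy + (1 - t) * a0 + g yt : ℝ) : EReal) := by
      refine (hglobal yt).trans ?_
      calc φ yt = q yt + ((g yt : ℝ) : EReal) := rfl
        _ ≤ ((t * cy + (1 - t) * a0 : ℝ) : EReal) + ((g yt : ℝ) : EReal) :=
            add_le_add_left hyt _
        _ = ((t * cy + (1 - t) * a0 + g yt : ℝ) : EReal) := by rw [← EReal.coe_add]
    have h2' : a0 + g u0 ≤ t * cy + (1 - t) * a0 + g yt := by
      rw [hφdef] at h2; simp only at h2
      rw [ha0, ← EReal.coe_add, EReal.coe_le_coe_iff] at h2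
      exact h2
    have hyt_z : yt - z = (u0 - z) + t • (y - u0) := by
      rw [hytdef]; module
    have hgyt : g yt = 1 / (2 * lam) * (‖u0 - z‖ ^ 2 + 2 * (t * I) + t ^ 2 * B) := by
      show 1 / (2 * lam) * ‖yt - z‖ ^ 2 = _
      rw [hyt_z, norm_add_sq_real, real_inner_smul_right, norm_smul]
      rw [Real.norm_eq_abs, abs_of_pos ht0]
      rw [hBdef, hIdef]; ring
    have hgu0 : g u0 = 1 / (2 * lam) * ‖u0 - z‖ ^ 2 := rfl
    rw [hgyt, hgu0] at h2'
    have hdiv : t * (a0 + lam⁻¹ * (-I)) ≤ t * (cy + t * (B / (2 * lam))) :=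
      step_div' a0 cy I B t lam _ hlam ht0 h2'
    exact le_of_mul_le_mul_left hdiv ht0
  have hB0 : 0 ≤ B / (2 * lam) := by rw [hBdef]; positivity
  clear_value I B
  by_contra hc
  push_neg at hc
  set D : ℝ := B / (2 * lam) with hDdef
  set ε : ℝ := a0 + lam⁻¹ * (-I) - cy with hεdef
  have hε : 0 < ε := by rw [hεdef]; linarith
  have ht0 : 0 < min 1 (ε / (2 * D + 1)) :=
    lt_min one_pos (div_pos hε (by linarith))
  have hk := hkey _ ht0 (min_le_left _ _)
  have hmul : min 1 (ε / (2 * D + 1)) * D ≤ ε / (2 * D + 1) * D :=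
    mul_le_mul_of_nonneg_right (min_le_right _ _) hB0
  have hlt : ε / (2 * D + 1) * D < ε := eps_step' ε D hε hB0
  have hεle : a0 + lam⁻¹ * (-I) = cy + ε := by rw [hεdef]; ring
  linarith [hk, hmul, hlt, hεle]

lemma step_core' (t lam m np2 N eps : ℝ) (ht : 0 < t) (hlam : 0 < lam) (hm : 0 ≤ m)
    (h1 : t * np2 / lam ≤ eps * (t + 2 * t / lam) + N * (t / (1 + lam * m))) :
    np2 / lam ≤ eps * (1 + 2 / lam) + N / (1 + lam * m) := by
  have h1m : 0 < 1 + lam * m := by nlinarith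
  have e1 : t * np2 / lam = t * (np2 / lam) := by ring
  have e2 : eps * (t + 2 * t / lam) + N * (t / (1 + lam * m))
      = t * (eps * (1 + 2 / lam) + N / (1 + lam * m)) := by
    field_simp
  rw [e1, e2] at h1
  exact le_of_mul_le_mul_left h1 ht

lemma eps_limit' (a b C : ℝ) (hC : 0 < C) (h : ∀ ε : ℝ, 0 < ε → a ≤ ε * C + b) : a ≤ b := by
  by_contra hc
  push_neg at hc
  have h2 := h ((a - b) / (2 * C)) (div_pos (by linarith) (by linarith))
  have e : (a - b) / (2 * C) * C = (a - b) / 2 := by field_simp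
  linarith

lemma step_sq' (lam m P2 P1 IP N : ℝ) (hlam : 0 < lam) (hm : 0 ≤ m) (hP2 : 0 ≤ P2)
    (hN : 0 ≤ N) (h2 : P2 / lam ≤ N / (1 + lam * m))
    (hNsq : N ^ 2 = P2 ^ 2 / lam ^ 2 - 2 * IP / lam + P1 ^ 2) :
    IP + m * P2 ^ 2 ≤ lam * P1 ^ 2 / 2 := by
  have h1m : 0 < 1 + lam * m := by nlinarith
  have hx : P2 * (1 + lam * m) ≤ N * lam := by
    rw [div_le_div_iff₀ hlam h1m] at h2; linarith
  have hsq : (P2 * (1 + lam * m)) ^ 2 ≤ (N * lam) ^ 2 := by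
    have := mul_self_le_mul_self (by positivity) hx
    nlinarith [this]
  have hNl : (N * lam) ^ 2 = P2 ^ 2 - 2 * IP * lam + P1 ^ 2 * lam ^ 2 := by
    have h0 : N ^ 2 * lam ^ 2 = (P2 ^ 2 / lam ^ 2 - 2 * IP / lam + P1 ^ 2) * lam ^ 2 := by
      rw [hNsq]
    calc (N * lam) ^ 2 = N ^ 2 * lam ^ 2 := by ring
      _ = (P2 ^ 2 / lam ^ 2 - 2 * IP / lam + P1 ^ 2) * lam ^ 2 := h0
      _ = P2 ^ 2 - 2 * IP * lam + P1 ^ 2 * lam ^ 2 := by field_simp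
  rw [hNl] at hsq
  have hkey : 2 * IP * lam + 2 * m * P2 ^ 2 * lam ≤ lam ^ 2 * P1 ^ 2 := by
    nlinarith [sq_nonneg (lam * m * P2), hsq]
  nlinarith [hkey, hlam]

lemma lim_zero' (a C : ℝ) (hC : 0 ≤ C) (h : ∀ l : ℝ, 0 < l → a ≤ l * C) : a ≤ 0 := by
  by_contra hc
  push_neg at hc
  have h2 := h (a / (2 * C + 1)) (div_pos hc (by linarith))
  have e : a / (2 * C + 1) * C * (2 * C + 1) = a * C := by field_simp
  nlinarith [mul_le_mul_of_nonneg_right h2 (by linarith : (0:ℝ) ≤ 2 * C + 1), e]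

set_option maxHeartbeats 3200000 in
lemma frechet_bound' [FiniteDimensional ℝ H] {q : H → EReal}
    (hproper : ProperFun q) (hconv : ConvexFun q) (hlsc : LowerSemicontinuous q)
    {d dstar : H} (hd : dstar ∈ subdiff q d)
    {db dbs : H} (hdb : dbs ∈ subdiff q db) {p : H × H}
    (hp : p ∈ gphFrechetNormal (subdiff q) db dbs)
    {ρ m r : ℝ} (hr : 0 < r) (hball : ‖db - d‖ + r ≤ ρ) (hm : 0 ≤ m)
    (hsm : ∀ u₁ u₂ v₁ v₂, v₁ ∈ subdiff q u₁ → v₂ ∈ subdiff q u₂ →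
      ‖u₁ - d‖ ≤ ρ → ‖u₂ - d‖ ≤ ρ → m * ‖u₁ - u₂‖ ^ 2 ≤ ⟪v₁ - v₂, u₁ - u₂⟫) :
    ⟪p.1, p.2⟫ ≤ -m * ‖p.2‖ ^ 2 := by
  by_cases hp2 : p.2 = 0
  · simp [hp2]
  have hp2n : 0 < ‖p.2‖ := norm_pos_iff.mpr hp2
  set u : H := ‖p.2‖⁻¹ • p.2 with hu_def
  have hu : ‖u‖ = 1 := norm_smul_inv_norm hp2
  have hup : ⟪p.2, u⟫ = ‖p.2‖ := by
    rw [hu_def, real_inner_smul_right, real_inner_self_eq_norm_sq]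
    field_simp
  have step2 : ∀ lam : ℝ, 0 < lam →
      ‖p.2‖ / lam ≤ ‖lam⁻¹ • p.2 - p.1‖ / (1 + lam * m) := by
    intro lam hlam
    set N : ℝ := ‖lam⁻¹ • p.2 - p.1‖ with hN_def
    refine eps_limit' _ _ (1 + 2 / lam) (by positivity) ?_
    intro ε hε
    obtain ⟨δ, hδ, hF⟩ := hp ε hε
    set t : ℝ := 1 / 2 * min (min δ (lam * δ / 2)) r with htdef
    have ht : 0 < t := by
      have h1 : 0 < min (min δ (lam * δ / 2)) r := lt_min (lt_min hδ (by positivity)) hr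
      rw [htdef]; linarith
    have htδ : t < δ := by
      have h1 := min_le_left (min δ (lam * δ / 2)) r
      have h2 := min_le_left δ (lam * δ / 2)
      rw [htdef]; linarith
    have htδ2 : 2 * t / lam < δ := by
      have h1 := min_le_left (min δ (lam * δ / 2)) r
      have h2 := min_le_right δ (lam * δ / 2)
      rw [div_lt_iff₀ hlam]
      rw [htdef]; nlinarith
    have htr : t ≤ r := by
      have h1 := min_le_right (min δ (lam * δ / 2)) r
      rw [htdef]; linarith
    set z : H := db + lam • dbs + t • u with hz
    obtain ⟨ut, hut⟩ := prox_exists' hproper hconv hlsc hd hlam z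
    set Δ : H := ut - db with hΔ
    have hid : lam⁻¹ • (z - ut) - dbs = lam⁻¹ • (t • u - Δ) := by
      have e1 : z - ut = lam • dbs + (t • u - Δ) := by rw [hz, hΔ]; abel
      rw [e1, smul_add, smul_smul, inv_mul_cancel₀ (ne_of_gt hlam), one_smul]; abel
    have hΔΔ : ⟪Δ, Δ⟫ = ‖Δ‖ ^ 2 := real_inner_self_eq_norm_sq Δ
    have hmono0 := subdiff_mono' hproper hut hdb
    rw [← hΔ, hid, real_inner_smul_left, inner_sub_left, real_inner_smul_left, hΔΔ] at hmono0
    have hmono1 : 0 ≤ t * ⟪u, Δ⟫ - ‖Δ‖ ^ 2 := by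
      nlinarith [hmono0, inv_pos.mpr hlam]
    have hcs : ⟪u, Δ⟫ ≤ ‖Δ‖ := by
      have := real_inner_le_norm u Δ
      rwa [hu, one_mul] at this
    have hΔt : ‖Δ‖ ≤ t := by nlinarith [norm_nonneg Δ]
    have hdbρ : ‖db - d‖ ≤ ρ := by linarith
    have hutρ : ‖ut - d‖ ≤ ρ := by
      have e : ut - d = Δ + (db - d) := by rw [hΔ]; abel
      calc ‖ut - d‖ = ‖Δ + (db - d)‖ := by rw [e]
        _ ≤ ‖Δ‖ + ‖db - d‖ := norm_add_le _ _
        _ ≤ ρ := by linarith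
    have hsm1 := hsm ut db (lam⁻¹ • (z - ut)) dbs hut hdb hutρ hdbρ
    rw [← hΔ, hid, real_inner_smul_left, inner_sub_left, real_inner_smul_left, hΔΔ] at hsm1
    clear_value u t z Δ
    have hsm2 : (1 + lam * m) * ‖Δ‖ ^ 2 ≤ t * ⟪u, Δ⟫ := by
      have e : lam * (lam⁻¹ * (t * ⟪u, Δ⟫ - ‖Δ‖ ^ 2)) = t * ⟪u, Δ⟫ - ‖Δ‖ ^ 2 := by
        field_simp
      nlinarith [mul_le_mul_of_nonneg_left hsm1 hlam.le, e]
    have hΔb : (1 + lam * m) * ‖Δ‖ ≤ t := by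
      rcases eq_or_lt_of_le (norm_nonneg Δ) with h0 | h0
      · rw [← h0, mul_zero]; exact ht.le
      · have hcs' : t * ⟪u, Δ⟫ ≤ t * ‖Δ‖ := mul_le_mul_of_nonneg_left hcs ht.le
        have h1 : (1 + lam * m) * ‖Δ‖ * ‖Δ‖ ≤ t * ‖Δ‖ := by nlinarith [hsm2, hcs']
        exact le_of_mul_le_mul_right h1 h0
    have h1m : (0:ℝ) < 1 + lam * m := by linarith [mul_nonneg hlam.le hm]
    have hΔle : ‖Δ‖ ≤ t / (1 + lam * m) := by
      rw [le_div_iff₀ h1m]; linarith [hΔb]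
    have hvt : ‖lam⁻¹ • (z - ut) - dbs‖ ≤ 2 * t / lam := by
      rw [hid, norm_smul, norm_inv, Real.norm_eq_abs, abs_of_pos hlam]
      have h4 : ‖t • u - Δ‖ ≤ t + ‖Δ‖ := by
        calc ‖t • u - Δ‖ ≤ ‖t • u‖ + ‖Δ‖ := norm_sub_le _ _
          _ = t + ‖Δ‖ := by rw [norm_smul, Real.norm_eq_abs, abs_of_pos ht, hu, mul_one]
      calc lam⁻¹ * ‖t • u - Δ‖ ≤ lam⁻¹ * (t + ‖Δ‖) :=
            mul_le_mul_of_nonneg_left h4 (inv_pos.mpr hlam).le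
        _ ≤ lam⁻¹ * (2 * t) := by
            have h5 : t + ‖Δ‖ ≤ 2 * t := by linarith
            exact mul_le_mul_of_nonneg_left h5 (inv_pos.mpr hlam).le
        _ = 2 * t / lam := by field_simp
    have happ := hF ut (lam⁻¹ • (z - ut)) hut
      (by rw [← hΔ]; exact lt_of_le_of_lt hΔt htδ)
      (lt_of_le_of_lt hvt htδ2)
    rw [← hΔ, hid, real_inner_smul_right, inner_sub_right, real_inner_smul_right, hup] at happ
    have hvt2 : ‖lam⁻¹ • (t • u - Δ)‖ ≤ 2 * t / lam := by rw [← hid]; exact hvt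
    have hrhs : ε * (‖Δ‖ + ‖lam⁻¹ • (t • u - Δ)‖) ≤ ε * (t + 2 * t / lam) := by
      apply mul_le_mul_of_nonneg_left _ hε.le
      linarith [hΔt, hvt2]
    have hsub : lam⁻¹ * ⟪p.2, Δ⟫ - ⟪p.1, Δ⟫ = ⟪lam⁻¹ • p.2 - p.1, Δ⟫ := by
      rw [inner_sub_left, real_inner_smul_left]
    have hinner : ⟪lam⁻¹ • p.2 - p.1, Δ⟫ ≤ N * ‖Δ‖ := real_inner_le_norm _ _
    have hNΔ : N * ‖Δ‖ ≤ N * (t / (1 + lam * m)) :=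
      mul_le_mul_of_nonneg_left hΔle (norm_nonneg _)
    apply step_core' t lam m (‖p.2‖) N ε ht hlam hm
    have hexp : t * ‖p.2‖ / lam = lam⁻¹ * (t * ‖p.2‖) := by field_simp
    rw [hexp]
    have h5 : lam⁻¹ * (t * ‖p.2‖ - ⟪p.2, Δ⟫) = lam⁻¹ * (t * ‖p.2‖) - lam⁻¹ * ⟪p.2, Δ⟫ := by
      ring
    linarith [happ, hrhs, hsub, hinner, hNΔ, h5]
  have step3 : ∀ lam : ℝ, 0 < lam →
      ⟪p.1, p.2⟫ + m * ‖p.2‖ ^ 2 ≤ lam * (‖p.1‖ ^ 2 / 2) := by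
    intro lam hlam
    have h2 := step2 lam hlam
    have hNsq : ‖lam⁻¹ • p.2 - p.1‖ ^ 2
        = ‖p.2‖ ^ 2 / lam ^ 2 - 2 * ⟪p.1, p.2⟫ / lam + ‖p.1‖ ^ 2 := by
      rw [norm_sub_sq_real, norm_smul, Real.norm_eq_abs, abs_of_pos (inv_pos.mpr hlam),
        real_inner_smul_left, real_inner_comm]
      rw [mul_pow]
      field_simp
    have := step_sq' lam m (‖p.2‖) (‖p.1‖) (⟪p.1, p.2⟫) (‖lam⁻¹ • p.2 - p.1‖)
      hlam hm (norm_nonneg _) (norm_nonneg _) h2 hNsq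
    linarith
  have := lim_zero' (⟪p.1, p.2⟫ + m * ‖p.2‖ ^ 2) (‖p.1‖ ^ 2 / 2) (by positivity) step3
  linarith

end AuxLemmas

/-- coderivative lower bound
`min_{‖s‖=1} dist(0, ∇f(x)ᵀs + D*(∂q)(d,d*)(s)) ≥ μ_f(x) + μ_q(d)`. -/
theorem coderiv_dist_lower_bound
    {n : ℕ} (f : EuclideanSpace ℝ (Fin n) → EuclideanSpace ℝ (Fin n))
    (q : EuclideanSpace ℝ (Fin n) → EReal)
    (hf : ContDiff ℝ 1 f)
    (hmono : ∀ x₁ x₂, 0 ≤ ⟪f x₂ - f x₁, x₂ - x₁⟫)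
    (hproper : ProperFun q) (hconv : ConvexFun q) (hlsc : LowerSemicontinuous q)
    (x d dstar : EuclideanSpace ℝ (Fin n)) (hd : dstar ∈ subdiff q d) :
    ∀ s, ‖s‖ = 1 → ∀ w ∈ coderiv (subdiff q) d dstar s,
      (sInf {r : ℝ | ∃ u, ‖u‖ = 1 ∧ r = ⟪fderiv ℝ f x u, u⟫}) +
        (⨆ ρ : {ρ : ℝ // 0 < ρ}, sInf {r : ℝ | ∃ d₁ d₂ ds₁ ds₂,
          ds₁ ∈ subdiff q d₁ ∧ ds₂ ∈ subdiff q d₂ ∧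
          ‖d₁ - d‖ ≤ ρ.1 ∧ ‖d₂ - d‖ ≤ ρ.1 ∧ d₁ ≠ d₂ ∧
          r = ⟪ds₁ - ds₂, d₁ - d₂⟫ / ‖d₁ - d₂‖ ^ 2}) ≤
      ‖ContinuousLinearMap.adjoint (fderiv ℝ f x) s + w‖ := by
  intro s hs w hw
  set A := fderiv ℝ f x with hA
  have h1 : sInf {r : ℝ | ∃ u, ‖u‖ = 1 ∧ r = ⟪A u, u⟫} ≤ ⟪A s, s⟫ := by
    apply csInf_le
    · refine ⟨-‖A‖, ?_⟩
      rintro r ⟨u, hu, rfl⟩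
      have hb1 := abs_real_inner_le_norm (A u) u
      have hb2 := A.le_opNorm u
      rw [hu, mul_one] at hb1 hb2
      linarith [neg_abs_le (⟪A u, u⟫ : ℝ)]
    · exact ⟨s, hs, rfl⟩
  have h2 : (⨆ ρ : {ρ : ℝ // 0 < ρ}, sInf {r : ℝ | ∃ d₁ d₂ ds₁ ds₂,
      ds₁ ∈ subdiff q d₁ ∧ ds₂ ∈ subdiff q d₂ ∧
      ‖d₁ - d‖ ≤ ρ.1 ∧ ‖d₂ - d‖ ≤ ρ.1 ∧ d₁ ≠ d₂ ∧
      r = ⟪ds₁ - ds₂, d₁ - d₂⟫ / ‖d₁ - d₂‖ ^ 2}) ≤ ⟪w, s⟫ := by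
    haveI : Nonempty {ρ : ℝ // 0 < ρ} := ⟨⟨1, one_pos⟩⟩
    apply ciSup_le
    rintro ⟨ρ, hρ⟩
    set S : Set ℝ := {r : ℝ | ∃ d₁ d₂ ds₁ ds₂,
      ds₁ ∈ subdiff q d₁ ∧ ds₂ ∈ subdiff q d₂ ∧
      ‖d₁ - d‖ ≤ ρ ∧ ‖d₂ - d‖ ≤ ρ ∧ d₁ ≠ d₂ ∧
      r = ⟪ds₁ - ds₂, d₁ - d₂⟫ / ‖d₁ - d₂‖ ^ 2} with hS
    have hbdd : ∀ r ∈ S, (0:ℝ) ≤ r := by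
      rintro r ⟨d₁, d₂, ds₁, ds₂, h₁, h₂, _, _, hne, rfl⟩
      exact div_nonneg (subdiff_mono' hproper h₁ h₂) (sq_nonneg _)
    set mρ : ℝ := sInf S with hmρ
    have hm0 : 0 ≤ mρ := Real.sInf_nonneg hbdd
    have hsm : ∀ u₁ u₂ v₁ v₂, v₁ ∈ subdiff q u₁ → v₂ ∈ subdiff q u₂ →
        ‖u₁ - d‖ ≤ ρ → ‖u₂ - d‖ ≤ ρ → mρ * ‖u₁ - u₂‖ ^ 2 ≤ ⟪v₁ - v₂, u₁ - u₂⟫ := by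
      intro u₁ u₂ v₁ v₂ h₁ h₂ hb₁ hb₂
      by_cases he : u₁ = u₂
      · subst he; simp
      · have hmem : ⟪v₁ - v₂, u₁ - u₂⟫ / ‖u₁ - u₂‖ ^ 2 ∈ S :=
          ⟨u₁, u₂, v₁, v₂, h₁, h₂, hb₁, hb₂, he, rfl⟩
        have hle : mρ ≤ ⟪v₁ - v₂, u₁ - u₂⟫ / ‖u₁ - u₂‖ ^ 2 :=
          csInf_le ⟨0, fun r hr => hbdd r hr⟩ hmem
        have hn : (0:ℝ) < ‖u₁ - u₂‖ ^ 2 :=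
          pow_pos (norm_pos_iff.mpr (sub_ne_zero.mpr he)) 2
        calc mρ * ‖u₁ - u₂‖ ^ 2
            ≤ ⟪v₁ - v₂, u₁ - u₂⟫ / ‖u₁ - u₂‖ ^ 2 * ‖u₁ - u₂‖ ^ 2 :=
              mul_le_mul_of_nonneg_right hle hn.le
          _ = ⟪v₁ - v₂, u₁ - u₂⟫ := div_mul_cancel₀ _ (ne_of_gt hn)
    obtain ⟨xs, ys, ps, hgr, hxs, hys, hps⟩ := hw
    have hev1 : ∀ᶠ k in atTop, ‖xs k - d‖ < ρ / 2 := by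
      have h := Metric.tendsto_nhds.mp hxs (ρ / 2) (by linarith)
      filter_upwards [h] with k hk
      rwa [dist_eq_norm] at hk
    have hev2 : ∀ᶠ k in atTop, ⟪(ps k).1, (ps k).2⟫ + mρ * ‖(ps k).2‖ ^ 2 ≤ 0 := by
      filter_upwards [hev1] with k hk
      have hb := frechet_bound' hproper hconv hlsc hd (hgr k).1 (hgr k).2
        (ρ := ρ) (m := mρ) (r := ρ / 2) (by linarith) (by linarith) hm0 hsm
      linarith [hb]
    have htend : Tendsto (fun k => ⟪(ps k).1, (ps k).2⟫ + mρ * ‖(ps k).2‖ ^ 2) atTop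
        (𝓝 (⟪w, -s⟫ + mρ * ‖-s‖ ^ 2)) := by
      have ht1 : Tendsto (fun k => (ps k).1) atTop (𝓝 w) :=
        (continuous_fst.tendsto _).comp hps
      have ht2 : Tendsto (fun k => (ps k).2) atTop (𝓝 (-s)) :=
        (continuous_snd.tendsto _).comp hps
      exact (ht1.inner ht2).add (((ht2.norm).pow 2).const_mul mρ)
    have hfinal : ⟪w, -s⟫ + mρ * ‖-s‖ ^ 2 ≤ 0 := le_of_tendsto htend hev2
    rw [inner_neg_right, norm_neg, hs] at hfinal
    nlinarith [hfinal]
  have h3 : ⟪A s, s⟫ + ⟪w, s⟫ ≤ ‖ContinuousLinearMap.adjoint A s + w‖ := by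
    have e : ⟪ContinuousLinearMap.adjoint A s + w, s⟫ = ⟪A s, s⟫ + ⟪w, s⟫ := by
      rw [inner_add_left, ContinuousLinearMap.adjoint_inner_left]
      rw [real_inner_comm s (A s)]
    calc ⟪A s, s⟫ + ⟪w, s⟫ = ⟪ContinuousLinearMap.adjoint A s + w, s⟫ := e.symm
      _ ≤ ‖ContinuousLinearMap.adjoint A s + w‖ * ‖s‖ := real_inner_le_norm _ _
      _ = ‖ContinuousLinearMap.adjoint A s + w‖ := by rw [hs, mul_one]
  linarith [h1, h2, h3]
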